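/- Let y ∈ {0,1}^n with n_+ positives, k ≤ n_+, and s ∈ ℝ^n. Suppose s realizes the k-margin: for every set S_+ of n_+ − k + 1 positive indices, (1/(n_+ − k + 1))·Σ_{i∈S_+} s_i − max_{j: y_j=0} s_j ≥ 1. Then ℓ^avg(s) ≤ 0, and consequently Prec@k(s) = 0. -/

import Mathlib

open Finset

/-- If every `m`-subset of `T` has sum at least `m * c`, then `T` itself has
sum at least `T.card * c`. Proved by downward induction on `T.card - m`. -/
lemma avg_subset_bound {α : Type*} [DecidableEq α] (s : α → ℝ) (c : ℝ) :
    ∀ d m (T : Finset α), 1 ≤ m → T.card = m + d →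
      (∀ S ∈ T.powersetCard m, (m : ℝ) * c ≤ ∑ i ∈ S, s i) →
      (T.card : ℝ) * c ≤ ∑ i ∈ T, s i := by
  intro d
  induction d with
  | zero =>
    intro m T hm hcard h
    have := h T (Finset.mem_powersetCard.mpr ⟨subset_rfl, by omega⟩)
    rw [hcard]
    simpa using this
  | succ d ih =>
    intro m T hm hcard h
    refine ih (m + 1) T (by omega) (by omega) ?_
    intro S' hS'
    obtain ⟨hsub, hcardS'⟩ := Finset.mem_powersetCard.mp hS'
    have key : ∑ x ∈ S', ∑ i ∈ S'.erase x, s i = (m : ℝ) * ∑ i ∈ S', s i := by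
      have h1 : ∀ x ∈ S', ∑ i ∈ S'.erase x, s i = (∑ i ∈ S', s i) - s x := by
        intro x hx
        have := Finset.sum_erase_add S' s hx
        linarith
      rw [Finset.sum_congr rfl h1, Finset.sum_sub_distrib, Finset.sum_const, hcardS']
      push_cast
      ring
    have hbound : ∀ x ∈ S', (m : ℝ) * c ≤ ∑ i ∈ S'.erase x, s i := by
      intro x hx
      exact h _ (Finset.mem_powersetCard.mpr ⟨(Finset.erase_subset x S').trans hsub,
        by rw [Finset.card_erase_of_mem hx, hcardS']; omega⟩)
    have hsum : ((m : ℝ) + 1) * ((m : ℝ) * c) ≤ (m : ℝ) * ∑ i ∈ S', s i := by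
      rw [← key]
      calc ((m : ℝ) + 1) * ((m : ℝ) * c) = ∑ _x ∈ S', (m : ℝ) * c := by
            rw [Finset.sum_const, hcardS']; push_cast; ring
        _ ≤ ∑ x ∈ S', ∑ i ∈ S'.erase x, s i := Finset.sum_le_sum hbound
    have hmpos : (0 : ℝ) < (m : ℝ) := by exact_mod_cast hm
    have : (m : ℝ) * (((m : ℝ) + 1) * c) ≤ (m : ℝ) * ∑ i ∈ S', s i := by nlinarith
    have := le_of_mul_le_mul_left this hmpos
    push_cast
    linarith

/-- Under the k-margin condition (the average score of every set of `n₊ - k + 1`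
positives exceeds every negative score by at least 1), the avg surrogate is
nonpositive and consequently Prec@k is zero. -/
theorem k_margin_implies_avg_zero (n k : ℕ) (s : Fin n → ℝ) (P : Finset (Fin n))
    (hk : k < P.card) (σ : Equiv.Perm (Fin n))
    (hσ : ∀ i j : Fin n, i ≤ j → s (σ j) ≤ s (σ i))
    (hneg : ∃ j : Fin n, j ∉ P)
    (h1 : (Finset.powersetCard k (Finset.univ : Finset (Fin n))).Nonempty)
    (hmargin : ∀ S ∈ Finset.powersetCard (P.card - k + 1) P, ∀ j : Fin n, j ∉ P →
      (1 / ((P.card : ℝ) - (k : ℝ) + 1)) * (∑ i ∈ S, s i) - s j ≥ 1) :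
    (Finset.powersetCard k (Finset.univ : Finset (Fin n))).sup' h1
        (fun Y => ((Y \ P).card : ℝ) + ((∑ i ∈ Y, s i) - ∑ i ∈ P, s i) +
          (((P.card : ℝ) - (k : ℝ)) / ((P.card : ℝ) - ((Y ∩ P).card : ℝ))) *
            ∑ i ∈ P \ Y, s i) ≤ 0 ∧
      ((Finset.univ.filter (fun i : Fin n => (i : ℕ) < k ∧ σ i ∉ P)).card : ℝ) = 0 := by
  have hm1 : 1 ≤ P.card - k + 1 := by omega
  have hmcast : ((P.card - k + 1 : ℕ) : ℝ) = (P.card : ℝ) - (k : ℝ) + 1 := by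
    push_cast [Nat.cast_sub hk.le]; ring
  have hmpos : (0 : ℝ) < (P.card : ℝ) - (k : ℝ) + 1 := by
    rw [← hmcast]; exact_mod_cast hm1
  constructor
  · apply Finset.sup'_le
    intro Y hY
    obtain ⟨-, hYk⟩ := Finset.mem_powersetCard.mp hY
    set a := (Y ∩ P).card with ha
    set b := (Y \ P).card with hb
    have hab : a + b = k := by
      rw [ha, hb, Finset.card_inter_add_card_sdiff, hYk]
    have hPY : (P \ Y).card = P.card - a := by
      have := Finset.card_inter_add_card_sdiff P Y
      rw [Finset.inter_comm] at this
      omega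
    have hak : a ≤ k := by omega
    have hDpos : (0 : ℝ) < (P.card : ℝ) - (a : ℝ) := by
      have : a < P.card := by omega
      have := (Nat.cast_lt (α := ℝ)).mpr this
      linarith
    set Spy : ℝ := ∑ i ∈ P \ Y, s i with hSpy
    -- key bound on each j ∈ Y \ P
    have hkey : ∀ j ∈ Y \ P, ((P.card : ℝ) - a) * (1 + s j) ≤ Spy := by
      intro j hj
      have hjP : j ∉ P := (Finset.mem_sdiff.mp hj).2
      have hbpos : 1 ≤ b := Finset.card_pos.mpr ⟨j, hj⟩
      have hcards : (P \ Y).card = (P.card - k + 1) + (k - 1 - a) := by omega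
      have := avg_subset_bound s (1 + s j) (k - 1 - a) (P.card - k + 1) (P \ Y) hm1
        hcards ?_
      · rw [hPY] at this
        have hcast : ((P.card - a : ℕ) : ℝ) = (P.card : ℝ) - a := by
          push_cast [Nat.cast_sub (by omega : a ≤ P.card)]; ring
        rw [hcast] at this
        linarith
      · intro S hS
        obtain ⟨hSsub, hScard⟩ := Finset.mem_powersetCard.mp hS
        have hSP : S ∈ Finset.powersetCard (P.card - k + 1) P :=
          Finset.mem_powersetCard.mpr ⟨hSsub.trans Finset.sdiff_subset, hScard⟩
        have := hmargin S hSP j hjP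
        rw [hmcast]
        have h2 : (1 / ((P.card : ℝ) - k + 1)) * (∑ i ∈ S, s i) ≥ 1 + s j := by linarith
        calc ((P.card : ℝ) - k + 1) * (1 + s j)
            ≤ ((P.card : ℝ) - k + 1) * ((1 / ((P.card : ℝ) - k + 1)) * (∑ i ∈ S, s i)) := by
              exact mul_le_mul_of_nonneg_left h2 (le_of_lt hmpos)
          _ = ∑ i ∈ S, s i := by field_simp
    have hsumYP : (∑ i ∈ Y \ P, s i) ≤ (b : ℝ) * (Spy / ((P.card : ℝ) - a) - 1) := by
      calc (∑ i ∈ Y \ P, s i) ≤ ∑ _i ∈ Y \ P, (Spy / ((P.card : ℝ) - a) - 1) := by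
            apply Finset.sum_le_sum
            intro j hj
            have hle : s j + 1 ≤ Spy / ((P.card : ℝ) - (a : ℝ)) := by
              rw [le_div_iff₀ hDpos]
              nlinarith [hkey j hj]
            linarith
        _ = (b : ℝ) * (Spy / ((P.card : ℝ) - a) - 1) := by
            rw [Finset.sum_const, ← hb, nsmul_eq_mul]
    -- decompose sums
    have hYsum : ∑ i ∈ Y, s i = (∑ i ∈ Y ∩ P, s i) + ∑ i ∈ Y \ P, s i :=
      (Finset.sum_inter_add_sum_sdiff Y P s).symm
    have hPsum : ∑ i ∈ P, s i = (∑ i ∈ Y ∩ P, s i) + Spy := by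
      rw [hSpy, ← Finset.sum_inter_add_sum_sdiff P Y s, Finset.inter_comm]
    rw [hYsum, hPsum]
    have habR : (a : ℝ) + (b : ℝ) = (k : ℝ) := by exact_mod_cast hab
    have hfinal : ((P.card : ℝ) - k) / ((P.card : ℝ) - a) * Spy
        = Spy - (b : ℝ) * (Spy / ((P.card : ℝ) - a)) := by
      field_simp
      linear_combination Spy * habR
    rw [hfinal]
    linarith
  · have hfilter : (Finset.univ.filter (fun i : Fin n => (i : ℕ) < k ∧ σ i ∉ P)) = ∅ := by
      rw [Finset.filter_eq_empty_iff]
      rintro i - ⟨hik, hjP⟩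
      set j := σ i with hj
      set Q := P.filter (fun q => 1 + s j ≤ s q) with hQ
      have hQk : k ≤ Q.card := by
        by_contra hlt
        push_neg at hlt
        have hQsub : Q ⊆ P := Finset.filter_subset _ _
        have hcard : P.card - k + 1 ≤ (P \ Q).card := by
          have := Finset.card_sdiff_of_subset hQsub
          omega
        obtain ⟨S, hSsub, hScard⟩ := Finset.exists_subset_card_eq (s := P \ Q) (n := P.card - k + 1) hcard
        have hSP : S ∈ Finset.powersetCard (P.card - k + 1) P :=
          Finset.mem_powersetCard.mpr ⟨hSsub.trans Finset.sdiff_subset, hScard⟩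
        have hmar := hmargin S hSP j hjP
        have hSne : S.Nonempty := Finset.card_pos.mp (by omega)
        have hslt : ∑ i ∈ S, s i < ∑ _i ∈ S, (1 + s j) := by
          apply Finset.sum_lt_sum_of_nonempty hSne
          intro q hq
          have := hSsub hq
          rw [Finset.mem_sdiff, hQ, Finset.mem_filter] at this
          push_neg at this
          exact this.2 this.1
        rw [Finset.sum_const, hScard] at hslt
        have hslt' : (∑ i ∈ S, s i) < ((P.card : ℝ) - k + 1) * (1 + s j) := by
          rw [← hmcast]
          rw [nsmul_eq_mul] at hslt
          exact hslt
        have h3 : 1 + s j ≤ (1 / ((P.card : ℝ) - k + 1)) * ∑ i ∈ S, s i := by linarith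
        have h4 : ((P.card : ℝ) - k + 1) * (1 + s j) ≤ ∑ i ∈ S, s i := by
          calc ((P.card : ℝ) - k + 1) * (1 + s j)
              ≤ ((P.card : ℝ) - k + 1) * ((1 / ((P.card : ℝ) - k + 1)) * ∑ i ∈ S, s i) :=
                mul_le_mul_of_nonneg_left h3 hmpos.le
            _ = ∑ i ∈ S, s i := by field_simp
        linarith
      have hmap : ∀ q ∈ Q, σ.symm q ∈ Finset.Iio i := by
        intro q hq
        rw [Finset.mem_Iio]
        by_contra hge
        push_neg at hge
        have := hσ i (σ.symm q) hge
        rw [Equiv.apply_symm_apply] at this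
        have hq' := (Finset.mem_filter.mp hq).2
        rw [← hj] at this
        linarith
      have hinj : Set.InjOn σ.symm Q := fun x _ y _ h => σ.symm.injective h
      have hle := Finset.card_le_card_of_injOn σ.symm hmap hinj
      rw [Fin.card_Iio] at hle
      omega
    rw [hfilter]
    simp
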